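/- arXiv:1512.05699 — 2 statements merged into one kernel-verified Lean document; each statement's English description precedes it below -/
import Mathlib

section
/- Suppose a sequence (a_n) of nonnegative reals satisfies, for a fixed integer m ≥ 2 and constant K₂ > 0, a_{m²n} ≤ m·a_{mn} + K₂·max(√(n ln n), 1) for all n, and a_n/n → γ*. Then there is a constant K₃ such that for all n ≥ 2, m·n·γ* ≤ a_{mn} + K₃·√(n ln n). -/
open Filter

theorem stmt7 (a : ℕ → ℝ) (ha : ∀ n, 0 ≤ a n)
    (m : ℕ) (hm : 2 ≤ m) (K₂ : ℝ) (hK₂ : 0 < K₂)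
    (hrec : ∀ n : ℕ, 1 ≤ n →
      a (m ^ 2 * n) ≤ m * a (m * n) + K₂ * max (Real.sqrt (n * Real.log n)) 1)
    (γ : ℝ) (hlim : Tendsto (fun n : ℕ => a n / n) atTop (nhds γ)) :
    ∃ K₃ : ℝ, ∀ n : ℕ, 2 ≤ n →
      (m : ℝ) * n * γ ≤ a (m * n) + K₃ * Real.sqrt (n * Real.log n) := by
  have hM2 : (2:ℝ) ≤ (m:ℝ) := by exact_mod_cast hm
  have hM0 : (0:ℝ) < (m:ℝ) := by linarith
  set u : ℝ := (Real.sqrt 2)⁻¹ with hu_def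
  have hs2 : (1:ℝ) < Real.sqrt 2 := by
    have : Real.sqrt 1 < Real.sqrt 2 := Real.sqrt_lt_sqrt (by norm_num) (by norm_num)
    simpa using this
  have hu0 : 0 < u := by
    rw [hu_def]; exact inv_pos.mpr (by linarith)
  have hu1 : u < 1 := by
    rw [hu_def]; exact inv_lt_one_of_one_lt₀ hs2
  have husq : u ^ 2 = 2⁻¹ := by
    rw [hu_def, inv_pow, Real.sq_sqrt (by norm_num : (0:ℝ) ≤ 2)]
  have hSummable : Summable (fun k : ℕ => ((k:ℝ) + 1) * u ^ k) := by
    have h1 : Summable (fun k : ℕ => (k:ℝ) * u ^ k) := by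
      have := summable_pow_mul_geometric_of_norm_lt_one 1
        (r := u) (by rw [Real.norm_eq_abs, abs_of_pos hu0]; exact hu1)
      simpa using this
    have h2 : Summable (fun k : ℕ => u ^ k) :=
      summable_geometric_of_lt_one hu0.le hu1
    have h3 := h1.add h2
    convert h3 using 2 with k
    ring
  set S : ℝ := ∑' k : ℕ, ((k:ℝ) + 1) * u ^ k with hS_def
  have hSnn : 0 ≤ S := tsum_nonneg (fun k => by positivity)
  have hlog2 : (0:ℝ) < Real.log 2 := Real.log_pos (by norm_num)
  set c : ℝ := Real.log (m:ℝ) / Real.log 2 with hc_def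
  have hc1 : 1 ≤ c := by
    rw [hc_def, le_div_iff₀ hlog2, one_mul]
    exact Real.log_le_log (by norm_num) hM2
  have hc0 : 0 < c := lt_of_lt_of_le one_pos hc1
  refine ⟨(m:ℝ) * (K₂ / (m:ℝ)^2 * (Real.sqrt c + 1) * S), fun n hn => ?_⟩
  have hn1 : 1 ≤ n := le_trans (by norm_num) hn
  have hnR2 : (2:ℝ) ≤ (n:ℝ) := by exact_mod_cast hn
  have hnR0 : (0:ℝ) < (n:ℝ) := by linarith
  set L : ℝ := Real.log (n:ℝ) with hL_def
  have hL2 : Real.log 2 ≤ L := Real.log_le_log (by norm_num) hnR2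
  have hL0 : 0 < L := lt_of_lt_of_le hlog2 hL2
  set T : ℝ := K₂ / (m:ℝ)^2 * (Real.sqrt c + 1) * Real.sqrt (L / (n:ℝ)) with hT_def
  have hsc0 : 0 ≤ Real.sqrt c := Real.sqrt_nonneg c
  have hsL0 : 0 ≤ Real.sqrt (L / (n:ℝ)) := Real.sqrt_nonneg _
  have hT0 : 0 ≤ T := by
    rw [hT_def]; positivity
  -- basic fact: 1/n ≤ √(L/n)
  have hinv : ((n:ℝ))⁻¹ ≤ Real.sqrt (L / (n:ℝ)) := by
    have hlog_half : (2:ℝ)⁻¹ ≤ Real.log 2 := by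
      have := Real.log_two_gt_d9
      linarith
    have h1 : ((n:ℝ))⁻¹ ≤ L := by
      have h2 : ((n:ℝ))⁻¹ ≤ 2⁻¹ := by
        apply inv_anti₀ (by norm_num) hnR2
      linarith
    have h2 : ((n:ℝ))⁻¹ = Real.sqrt (((n:ℝ))⁻¹ ^ 2) := by
      rw [Real.sqrt_sq (by positivity)]
    rw [h2]
    apply Real.sqrt_le_sqrt
    rw [div_eq_mul_inv]
    calc ((n:ℝ))⁻¹ ^ 2 = ((n:ℝ))⁻¹ * ((n:ℝ))⁻¹ := sq ((n:ℝ))⁻¹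
    _ ≤ L * ((n:ℝ))⁻¹ := mul_le_mul_of_nonneg_right h1 (by positivity)
  -- the per-step bound
  have hstep : ∀ N : ℕ,
      a (m ^ (N + 2) * n) / ((m:ℝ) ^ (N + 2) * (n:ℝ)) ≤
        a (m ^ (N + 1) * n) / ((m:ℝ) ^ (N + 1) * (n:ℝ)) + T * (((N:ℝ) + 1) * u ^ N) := by
    intro N
    have hn' : 1 ≤ m ^ N * n := Nat.one_le_iff_ne_zero.mpr (by positivity)
    have hr := hrec (m ^ N * n) hn'
    have hidx1 : m ^ 2 * (m ^ N * n) = m ^ (N + 2) * n := by ring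
    have hidx2 : m * (m ^ N * n) = m ^ (N + 1) * n := by ring
    rw [hidx1, hidx2] at hr
    have hcast : ((m ^ N * n : ℕ) : ℝ) = (m:ℝ) ^ N * (n:ℝ) := by push_cast; ring
    rw [hcast] at hr
    have hlogP : Real.log ((m:ℝ) ^ N * (n:ℝ)) = (N:ℝ) * Real.log (m:ℝ) + L := by
      rw [Real.log_mul (by positivity) (by positivity), Real.log_pow, hL_def]
    rw [hlogP] at hr
    set D : ℝ := (N:ℝ) * Real.log (m:ℝ) + L with hD_def
    set P : ℝ := (m:ℝ) ^ N * (n:ℝ) with hP_def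
    set A : ℝ := ((N:ℝ) + 1) * u ^ N with hA_def
    have hA0 : 0 < A := by rw [hA_def]; positivity
    have hPpos : (0:ℝ) < P := by rw [hP_def]; positivity
    have hlogm0 : 0 ≤ Real.log (m:ℝ) := Real.log_nonneg (by linarith)
    have hD0 : 0 ≤ D := by rw [hD_def]; positivity
    -- √(P * D) / P = √(D / P)
    have hsqrtdiv : Real.sqrt (D / P) = Real.sqrt (P * D) / P := by
      rw [show D / P = (P * D) * (P⁻¹) ^ 2 from by field_simp]
      rw [Real.sqrt_mul (mul_nonneg hPpos.le hD0), Real.sqrt_sq (inv_nonneg.mpr hPpos.le),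
        div_eq_mul_inv]
    -- inside bound on the ratio
    have hMpow : (2:ℝ) ^ N ≤ (m:ℝ) ^ N := pow_le_pow_left₀ (by norm_num) hM2 N
    have hlogm : Real.log (m:ℝ) ≤ c * L := by
      have h1 : Real.log (m:ℝ) = c * Real.log 2 := by
        rw [hc_def]; field_simp
      rw [h1]
      exact mul_le_mul_of_nonneg_left hL2 hc0.le
    have hDle : D ≤ c * ((N:ℝ) + 1) ^ 2 * L := by
      have h1 : D ≤ (N:ℝ) * (c * L) + c * L := by
        have h4 := mul_le_mul_of_nonneg_left hlogm (Nat.cast_nonneg N)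
        have h5 : L ≤ c * L := le_mul_of_one_le_left hL0.le hc1
        rw [hD_def]; linarith
      have h3 : (N:ℝ) * (c * L) + c * L ≤ c * ((N:ℝ) + 1) ^ 2 * L := by
        have hN1 : (1:ℝ) ≤ (N:ℝ) + 1 := le_add_of_nonneg_left (Nat.cast_nonneg N)
        have hN0 : (0:ℝ) ≤ (N:ℝ) := Nat.cast_nonneg N
        have key : c * ((N:ℝ) + 1) ^ 2 * L - ((N:ℝ) * (c * L) + c * L)
            = c * L * (((N:ℝ) + 1) * (N:ℝ)) := by ring
        have pos : 0 ≤ c * L * (((N:ℝ) + 1) * (N:ℝ)) :=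
          mul_nonneg (mul_nonneg hc0.le hL0.le) (mul_nonneg (by linarith) hN0)
        linarith [key, pos]
      linarith
    have hu2N : (u ^ N) ^ 2 = ((2:ℝ) ^ N)⁻¹ := by
      rw [← pow_mul, show N * 2 = 2 * N by ring, pow_mul, husq, inv_pow]
    have hratio : D / P ≤ c * A ^ 2 * (L / (n:ℝ)) := by
      have h2N0 : (0:ℝ) < (2:ℝ) ^ N := by positivity
      have hrhs : c * A ^ 2 * (L / (n:ℝ)) =
          (c * ((N:ℝ) + 1) ^ 2 * L) / ((2:ℝ) ^ N * (n:ℝ)) := by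
        rw [hA_def, mul_pow, hu2N]
        field_simp
        try ring
      rw [hrhs, hP_def]
      apply div_le_div₀ (mul_nonneg (mul_nonneg hc0.le (sq_nonneg _)) hL0.le) hDle
        (by positivity)
      exact mul_le_mul_of_nonneg_right hMpow hnR0.le
    have hsqrt_bound : Real.sqrt (D / P) ≤ Real.sqrt c * A * Real.sqrt (L / (n:ℝ)) := by
      have h1 := Real.sqrt_le_sqrt hratio
      have h2 : Real.sqrt (c * A ^ 2 * (L / (n:ℝ))) =
          Real.sqrt c * A * Real.sqrt (L / (n:ℝ)) := by
        rw [Real.sqrt_mul (mul_nonneg hc0.le (sq_nonneg A)), Real.sqrt_mul hc0.le,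
          Real.sqrt_sq hA0.le]
      rw [h2] at h1
      exact h1
    -- bound on 1/P
    have hPinv : P⁻¹ ≤ A * Real.sqrt (L / (n:ℝ)) := by
      have e1 : P⁻¹ = ((m:ℝ) ^ N)⁻¹ * ((n:ℝ))⁻¹ := by
        rw [hP_def, mul_inv]
      have h2N0 : (0:ℝ) < (2:ℝ) ^ N := by positivity
      have e2 : ((m:ℝ) ^ N)⁻¹ ≤ ((2:ℝ) ^ N)⁻¹ := inv_anti₀ h2N0 hMpow
      have e3 : ((2:ℝ) ^ N)⁻¹ ≤ u ^ N := by
        have huN1 : u ^ N ≤ 1 := pow_le_one₀ hu0.le hu1.le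
        have h5 : ((2:ℝ) ^ N)⁻¹ = u ^ N * u ^ N := by rw [← hu2N]; ring
        rw [h5]
        calc u ^ N * u ^ N ≤ u ^ N * 1 :=
              mul_le_mul_of_nonneg_left huN1 (pow_nonneg hu0.le N)
          _ = u ^ N := mul_one _
      have e4 : u ^ N ≤ A := by
        rw [hA_def]
        have hN1 : (1:ℝ) ≤ (N:ℝ) + 1 := le_add_of_nonneg_left (Nat.cast_nonneg N)
        exact le_mul_of_one_le_left (pow_nonneg hu0.le N) hN1
      calc P⁻¹ = ((m:ℝ) ^ N)⁻¹ * ((n:ℝ))⁻¹ := e1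
        _ ≤ A * Real.sqrt (L / (n:ℝ)) :=
            mul_le_mul (le_trans e2 (le_trans e3 e4)) hinv
              (inv_nonneg.mpr hnR0.le) hA0.le
    -- now the max term bound
    set MAX : ℝ := max (Real.sqrt (P * D)) 1 with hMAX_def
    have hmax : MAX ≤ Real.sqrt (P * D) + 1 :=
      max_le (le_add_of_nonneg_right zero_le_one)
        (le_add_of_nonneg_left (Real.sqrt_nonneg _))
    have hP2 : (m:ℝ) ^ (N + 2) * (n:ℝ) = (m:ℝ) ^ 2 * P := by
      rw [hP_def]; ring
    have hmaxdiv : K₂ * MAX / ((m:ℝ) ^ (N + 2) * (n:ℝ)) ≤ T * A := by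
      rw [hP2]
      have hkey : MAX / P ≤ (Real.sqrt c + 1) * A * Real.sqrt (L / (n:ℝ)) := by
        have h1 : MAX / P ≤ (Real.sqrt (P * D) + 1) / P :=
          (div_le_div_iff_of_pos_right hPpos).mpr hmax
        have h2 : (Real.sqrt (P * D) + 1) / P = Real.sqrt (P * D) / P + P⁻¹ := by
          field_simp
        have h3 : Real.sqrt (P * D) / P + P⁻¹ ≤
            Real.sqrt c * A * Real.sqrt (L / (n:ℝ)) + A * Real.sqrt (L / (n:ℝ)) := by
          rw [← hsqrtdiv]
          exact add_le_add hsqrt_bound hPinv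
        calc MAX / P ≤ (Real.sqrt (P * D) + 1) / P := h1
          _ = Real.sqrt (P * D) / P + P⁻¹ := h2
          _ ≤ Real.sqrt c * A * Real.sqrt (L / (n:ℝ)) + A * Real.sqrt (L / (n:ℝ)) := h3
          _ = (Real.sqrt c + 1) * A * Real.sqrt (L / (n:ℝ)) := by ring
      have hrw : K₂ * MAX / ((m:ℝ) ^ 2 * P) = (K₂ / (m:ℝ) ^ 2) * (MAX / P) := by
        field_simp
        try ring
      rw [hrw]
      have := mul_le_mul_of_nonneg_left hkey (le_of_lt (by positivity : (0:ℝ) < K₂ / (m:ℝ)^2))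
      calc (K₂ / (m:ℝ) ^ 2) * (MAX / P)
          ≤ (K₂ / (m:ℝ) ^ 2) * ((Real.sqrt c + 1) * A * Real.sqrt (L / (n:ℝ))) := this
        _ = T * A := by rw [hT_def]; ring
    -- put it together
    have hP20 : (0:ℝ) < (m:ℝ) ^ (N + 2) * (n:ℝ) := by positivity
    have hsplit : ((m:ℝ) * a (m ^ (N + 1) * n) + K₂ * MAX) / ((m:ℝ) ^ (N + 2) * (n:ℝ)) =
        a (m ^ (N + 1) * n) / ((m:ℝ) ^ (N + 1) * (n:ℝ)) +
          K₂ * MAX / ((m:ℝ) ^ (N + 2) * (n:ℝ)) := by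
      rw [div_add_div _ _ (by positivity) (by positivity)]
      rw [div_eq_div_iff (by positivity) (by positivity)]
      ring
    calc a (m ^ (N + 2) * n) / ((m:ℝ) ^ (N + 2) * (n:ℝ))
        ≤ ((m:ℝ) * a (m ^ (N + 1) * n) + K₂ * MAX) / ((m:ℝ) ^ (N + 2) * (n:ℝ)) :=
          (div_le_div_iff_of_pos_right hP20).mpr hr
      _ = a (m ^ (N + 1) * n) / ((m:ℝ) ^ (N + 1) * (n:ℝ)) +
          K₂ * MAX / ((m:ℝ) ^ (N + 2) * (n:ℝ)) := hsplit
      _ ≤ a (m ^ (N + 1) * n) / ((m:ℝ) ^ (N + 1) * (n:ℝ)) + T * A :=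
          add_le_add_right hmaxdiv _
  -- telescoping
  have hkey : ∀ N : ℕ,
      a (m ^ (N + 1) * n) / ((m:ℝ) ^ (N + 1) * (n:ℝ)) ≤
        a (m * n) / ((m:ℝ) * (n:ℝ)) + T * ∑ k ∈ Finset.range N, ((k:ℝ) + 1) * u ^ k := by
    intro N
    induction N with
    | zero => simp [pow_one]
    | succ N ih =>
      have h1 := hstep N
      rw [Finset.sum_range_succ, mul_add]
      have h2 : N + 1 + 1 = N + 2 := by ring
      rw [h2] at *
      linarith
  have hbound : ∀ N : ℕ,
      a (m ^ (N + 1) * n) / ((m:ℝ) ^ (N + 1) * (n:ℝ)) ≤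
        a (m * n) / ((m:ℝ) * (n:ℝ)) + T * S := by
    intro N
    refine (hkey N).trans ?_
    have hsum : ∑ k ∈ Finset.range N, ((k:ℝ) + 1) * u ^ k ≤ S :=
      Summable.sum_le_tsum (Finset.range N) (fun k _ => by positivity) hSummable
    have := mul_le_mul_of_nonneg_left hsum hT0
    linarith
  -- the limit along the subsequence
  have hsub : Tendsto (fun N : ℕ => a (m ^ (N + 1) * n) / ((m:ℝ) ^ (N + 1) * (n:ℝ)))
      atTop (nhds γ) := by
    have hmono : Tendsto (fun N : ℕ => m ^ (N + 1) * n) atTop atTop := by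
      apply tendsto_atTop_mono (f := id) ?_ tendsto_id
      intro N
      calc N ≤ 2 ^ N := (Nat.lt_two_pow_self (n := N)).le
        _ ≤ m ^ N := Nat.pow_le_pow_left hm N
        _ ≤ m ^ (N + 1) := Nat.pow_le_pow_right (by omega) (by omega)
        _ ≤ m ^ (N + 1) * n := Nat.le_mul_of_pos_right _ (by omega)
    have := hlim.comp hmono
    convert this using 2 with N
    simp only [Function.comp]
    push_cast
    ring
  have hγle : γ ≤ a (m * n) / ((m:ℝ) * (n:ℝ)) + T * S :=
    le_of_tendsto hsub (Filter.Eventually.of_forall hbound)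
  -- multiply back
  have hnsqrt : (n:ℝ) * Real.sqrt (L / (n:ℝ)) = Real.sqrt ((n:ℝ) * L) := by
    rw [show L / (n:ℝ) = ((n:ℝ) * L) * (((n:ℝ))⁻¹) ^ 2 by field_simp]
    rw [Real.sqrt_mul (by positivity), Real.sqrt_sq (by positivity)]
    field_simp
  have hfinal := mul_le_mul_of_nonneg_left hγle (le_of_lt (by positivity : (0:ℝ) < (m:ℝ) * (n:ℝ)))
  have e1 : (m:ℝ) * (n:ℝ) * (a (m * n) / ((m:ℝ) * (n:ℝ))) = a (m * n) := by
    field_simp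
  have e2 : (m:ℝ) * (n:ℝ) * (T * S) =
      (m:ℝ) * (K₂ / (m:ℝ)^2 * (Real.sqrt c + 1) * S) * Real.sqrt ((n:ℝ) * L) := by
    rw [hT_def, ← hnsqrt]
    ring
  calc (m:ℝ) * (n:ℝ) * γ
      ≤ (m:ℝ) * (n:ℝ) * (a (m * n) / ((m:ℝ) * (n:ℝ)) + T * S) := hfinal
    _ = a (m * n) + (m:ℝ) * (K₂ / (m:ℝ)^2 * (Real.sqrt c + 1) * S) * Real.sqrt ((n:ℝ) * L) := by
        rw [mul_add, e1, e2]
    _ = a (m * n) + (m:ℝ) * (K₂ / (m:ℝ)^2 * (Real.sqrt c + 1) * S) * Real.sqrt ((n:ℝ) * Real.log (n:ℝ)) := by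
        rw [hL_def]
end

section
/- The function γ̃* : {(q_1,...,q_m) : q_j > 0, Σ q_j = m} → ℝ defined as the limit of (1/n)·E(L(X^(1)_1,...,X^(1)_{nq_1};...;X^(m)_1,...,X^(m)_{nq_m})) is concave on its domain. -/
open MeasureTheory Filter

noncomputable def alignScore {A : Type*} {m n k : ℕ} (S : (Fin m → A) → ℝ)
    (w : Fin m → Fin n → A) (π : Fin m → Fin k → Fin n) : ℝ :=
  ∑ i : Fin k, S (fun j => w j (π j i))

noncomputable def optScore {A : Type*} (m n : ℕ) (S : (Fin m → A) → ℝ)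
    (w : Fin m → Fin n → A) : ℝ :=
  sSup {x : ℝ | ∃ (k : ℕ) (π : Fin m → Fin k → Fin n),
    (∀ j, StrictMono (π j)) ∧ x = alignScore S w π}

def PermInvariant {A : Type*} {m : ℕ} (S : (Fin m → A) → ℝ) : Prop :=
  ∀ (σ : Equiv.Perm (Fin m)) (x : Fin m → A), S (x ∘ σ) = S x

def BddDiffOne {A : Type*} {m : ℕ} (S : (Fin m → A) → ℝ) (D : ℝ) : Prop :=
  ∀ x y : Fin m → A, (∃ j₀, ∀ j, j ≠ j₀ → x j = y j) → |S x - S y| ≤ D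

noncomputable def wordMeasure {A : Type*} [MeasurableSpace A] (p : Measure A) (m n : ℕ) :
    Measure (Fin m → Fin n → A) :=
  Measure.pi fun _ => Measure.pi fun _ => p

noncomputable def expL {A : Type*} [MeasurableSpace A] (p : Measure A) (m n : ℕ)
    (S : (Fin m → A) → ℝ) : ℝ :=
  ∫ w, optScore m n S w ∂(wordMeasure p m n)

noncomputable def optScoreV {A : Type*} (m : ℕ) (ℓ : Fin m → ℕ) (S : (Fin m → A) → ℝ)
    (w : ∀ j : Fin m, Fin (ℓ j) → A) : ℝ :=
  sSup {x : ℝ | ∃ (k : ℕ) (π : ∀ j : Fin m, Fin k → Fin (ℓ j)),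
    (∀ j, StrictMono (π j)) ∧ x = ∑ i : Fin k, S (fun j => w j (π j i))}

noncomputable def wordMeasureV {A : Type*} [MeasurableSpace A] (p : Measure A) {m : ℕ}
    (ℓ : Fin m → ℕ) : Measure (∀ j : Fin m, Fin (ℓ j) → A) :=
  Measure.pi fun _ => Measure.pi fun _ => p

noncomputable def expLV {A : Type*} [MeasurableSpace A] (p : Measure A) {m : ℕ}
    (ℓ : Fin m → ℕ) (S : (Fin m → A) → ℝ) : ℝ :=
  ∫ w, optScoreV m ℓ S w ∂(wordMeasureV p ℓ)

noncomputable def blockScore {A : Type*} {m n : ℕ} (S : (Fin m → A) → ℝ)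
    (w : Fin m → Fin n → A) (lo hi : Fin m → ℕ) : ℝ :=
  sSup {x : ℝ | ∃ (k : ℕ) (π : Fin m → Fin k → Fin n),
    (∀ j, StrictMono (π j)) ∧ (∀ j i, lo j ≤ (π j i : ℕ) ∧ (π j i : ℕ) < hi j) ∧
    x = ∑ i : Fin k, S (fun j => w j (π j i))}



section Atoms
variable {A : Type*} [MeasurableSpace A]

def mRel (a b : A) : Prop := ∀ s : Set A, MeasurableSet s → (a ∈ s ↔ b ∈ s)

def mAtom (a : A) : Set A := ⋂₀ {s : Set A | MeasurableSet s ∧ a ∈ s}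

lemma mAtom_measurableSet [Finite A] (a : A) : MeasurableSet (mAtom a) := by
  apply MeasurableSet.sInter ((Set.toFinite _).countable)
  rintro s ⟨hs, -⟩; exact hs

lemma mem_mAtom_iff {a b : A} : b ∈ mAtom a ↔ mRel a b := by
  constructor
  · intro hb s hs
    constructor
    · intro ha; exact hb s ⟨hs, ha⟩
    · intro hbs; by_contra ha
      exact (hb sᶜ ⟨hs.compl, ha⟩) hbs
  · intro h s hs
    exact (h s hs.1).mp hs.2

lemma self_mem_mAtom (a : A) : a ∈ mAtom a := fun _ hs => hs.2

lemma measurableSet_invariant {ι : Type*} {X : ι → Type*} [∀ i, MeasurableSpace (X i)]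
    (R : ∀ i, X i → X i → Prop)
    (hR : ∀ i (s : Set (X i)), MeasurableSet s → ∀ a b, R i a b → (a ∈ s ↔ b ∈ s))
    {M : Set (∀ i, X i)} (hM : MeasurableSet M)
    {a b : ∀ i, X i} (hab : ∀ i, R i (a i) (b i)) : a ∈ M ↔ b ∈ M := by
  let m' : MeasurableSpace (∀ i, X i) :=
    { MeasurableSet' := fun M => ∀ u v : ∀ i, X i, (∀ i, R i (u i) (v i)) → (u ∈ M ↔ v ∈ M)
      measurableSet_empty := by simp
      measurableSet_compl := fun s hs u v huv => not_congr (hs u v huv)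
      measurableSet_iUnion := fun f hf u v huv => by
        simp only [Set.mem_iUnion]
        exact exists_congr fun n => hf n u v huv }
  have hle : (MeasurableSpace.pi : MeasurableSpace (∀ i, X i)) ≤ m' := by
    rw [MeasurableSpace.pi]
    apply iSup_le
    intro i
    rintro M ⟨s, hs, rfl⟩
    intro u v huv
    exact hR i s hs (u i) (v i) (huv i)
  exact hle M hM a b hab

end Atoms

section MP
variable {A : Type*} [MeasurableSpace A] (p : Measure A) [IsProbabilityMeasure p]

lemma pi_eval_preimage {ι : Type*} [Fintype ι] (i : ι) {s : Set A} (hs : MeasurableSet s) :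
    (Measure.pi fun _ : ι => p) (Function.eval i ⁻¹' s) = p s := by
  classical
  have hpre : Function.eval i ⁻¹' s =
      Set.univ.pi (Function.update (fun _ : ι => (Set.univ : Set A)) i s) := by
    ext w
    simp only [Set.mem_preimage, Set.mem_univ_pi, Function.update_apply, Function.eval]
    constructor
    · intro h i'; by_cases hi : i' = i <;> simp [hi, h]
    · intro h; have := h i; simpa using this
  rw [hpre, Measure.pi_pi]
  rw [Finset.prod_eq_single i (fun b _ hb => by simp [Function.update_apply, hb])
    (fun h => absurd (Finset.mem_univ i) h)]
  simp

lemma measurePreserving_comp_inj {a b : ℕ} (τ : Fin a → Fin b) (hτ : Function.Injective τ) :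
    MeasurePreserving (fun (w : Fin b → A) => w ∘ τ)
      (Measure.pi fun _ => p) (Measure.pi fun _ => p) := by
  classical
  have hmeas : Measurable fun (w : Fin b → A) => w ∘ τ :=
    measurable_pi_lambda _ fun i => measurable_pi_apply (τ i)
  refine ⟨hmeas, ?_⟩
  refine (Measure.pi_eq fun s hs => ?_).symm
  rw [Measure.map_apply hmeas (MeasurableSet.univ_pi hs)]
  have hpre : (fun (w : Fin b → A) => w ∘ τ) ⁻¹' (Set.univ.pi s) =
      Set.univ.pi (fun c => ⋂ (i : Fin a) (_ : τ i = c), s i) := by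
    ext w
    simp only [Set.mem_preimage, Set.mem_univ_pi, Set.mem_iInter, Function.comp]
    constructor
    · intro h c i hic; subst hic; exact h i
    · intro h i; exact h (τ i) i rfl
  rw [hpre, Measure.pi_pi]
  have h1 : ∀ c ∈ Finset.univ, c ∉ Finset.image τ Finset.univ →
      p (⋂ (i : Fin a) (_ : τ i = c), s i) = 1 := by
    intro c _ hc
    have : (⋂ (i : Fin a) (_ : τ i = c), s i) = Set.univ := by
      ext x
      simp only [Set.mem_iInter, Set.mem_univ, iff_true]
      intro i hi
      exact absurd (Finset.mem_image.mpr ⟨i, Finset.mem_univ i, hi⟩) hc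
    rw [this]; exact measure_univ
  rw [← Finset.prod_subset (Finset.subset_univ (Finset.image τ Finset.univ)) h1,
    Finset.prod_image (fun x _ y _ h => hτ h)]
  refine Finset.prod_congr rfl fun i _ => ?_
  congr 1
  ext x
  simp only [Set.mem_iInter]
  constructor
  · intro h; exact h i rfl
  · intro h i' hi'; rwa [hτ hi']

lemma measurePreserving_pi_map {ι : Type*} [Fintype ι] {X Y : ι → Type*}
    [∀ i, MeasurableSpace (X i)] [∀ i, MeasurableSpace (Y i)]
    (μ : ∀ i, Measure (X i)) (ν : ∀ i, Measure (Y i))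
    [∀ i, IsProbabilityMeasure (μ i)] [∀ i, IsProbabilityMeasure (ν i)]
    (F : ∀ i, X i → Y i) (hF : ∀ i, MeasurePreserving (F i) (μ i) (ν i)) :
    MeasurePreserving (fun (w : ∀ i, X i) i => F i (w i)) (Measure.pi μ) (Measure.pi ν) := by
  have hmeas : Measurable fun (w : ∀ i, X i) i => F i (w i) :=
    measurable_pi_lambda _ fun i => (hF i).measurable.comp (measurable_pi_apply i)
  refine ⟨hmeas, ?_⟩
  refine (Measure.pi_eq fun s hs => ?_).symm
  rw [Measure.map_apply hmeas (MeasurableSet.univ_pi hs)]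
  have hpre : (fun (w : ∀ i, X i) i => F i (w i)) ⁻¹' Set.univ.pi s
      = Set.univ.pi fun i => F i ⁻¹' s i := by
    ext w; simp [Set.mem_univ_pi]
  rw [hpre, Measure.pi_pi]
  exact Finset.prod_congr rfl fun i _ => (hF i).measure_preimage (hs i).nullMeasurableSet

lemma measurePreserving_select {m : ℕ} (L : Fin m → ℕ) (σ : ∀ j, Fin (L j)) :
    MeasurePreserving (fun (w : ∀ j : Fin m, Fin (L j) → A) (j : Fin m) => w j (σ j))
      (Measure.pi fun j => Measure.pi fun _ : Fin (L j) => p)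
      (Measure.pi fun _ : Fin m => p) := by
  have hmeas : Measurable fun (w : ∀ j : Fin m, Fin (L j) → A) (j : Fin m) => w j (σ j) :=
    measurable_pi_lambda _ fun j => (measurable_pi_apply (σ j)).comp (measurable_pi_apply j)
  refine ⟨hmeas, ?_⟩
  refine (Measure.pi_eq fun s hs => ?_).symm
  rw [Measure.map_apply hmeas (MeasurableSet.univ_pi hs)]
  have hpre : (fun (w : ∀ j : Fin m, Fin (L j) → A) (j : Fin m) => w j (σ j)) ⁻¹' Set.univ.pi s
      = Set.univ.pi fun j => Function.eval (σ j) ⁻¹' s j := by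
    ext w; simp [Set.mem_univ_pi, Function.eval]
  rw [hpre, Measure.pi_pi]
  exact Finset.prod_congr rfl fun j _ => pi_eval_preimage p (σ j) (hs j)

end MP


section Comb
variable {A : Type*} {m : ℕ} (S : (Fin m → A) → ℝ)

def algnSet (L : Fin m → ℕ) (w : ∀ j : Fin m, Fin (L j) → A) : Set ℝ :=
  {x : ℝ | ∃ (k : ℕ) (π : ∀ j : Fin m, Fin k → Fin (L j)),
    (∀ j, StrictMono (π j)) ∧ x = ∑ i : Fin k, S (fun j => w j (π j i))}

lemma optScoreV_eq (L : Fin m → ℕ) (w : ∀ j : Fin m, Fin (L j) → A) :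
    optScoreV m L S w = sSup (algnSet S L w) := rfl

lemma zero_mem_algnSet (L : Fin m → ℕ) (w : ∀ j : Fin m, Fin (L j) → A) :
    (0 : ℝ) ∈ algnSet S L w :=
  ⟨0, fun _ i => i.elim0, fun _ i => i.elim0, by simp⟩

lemma algn_k_le {L : Fin m → ℕ} {k : ℕ} (π : ∀ j : Fin m, Fin k → Fin (L j))
    (hπ : ∀ j, StrictMono (π j)) (j : Fin m) : k ≤ L j := by
  have := Fintype.card_le_of_injective (π j) (hπ j).injective
  simpa using this

lemma algnSet_le [Nonempty A] (hm : 1 ≤ m) (hS0 : ∀ x, 0 ≤ S x) {sStar : ℝ} (hSb : ∀ x, S x ≤ sStar) {L : Fin m → ℕ} {w : ∀ j : Fin m, Fin (L j) → A}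
    {x : ℝ} (hx : x ∈ algnSet S L w) : x ≤ (L ⟨0, hm⟩ : ℝ) * sStar := by
  obtain ⟨k, π, hπ, rfl⟩ := hx
  have hsq : (0:ℝ) ≤ sStar := le_trans (hS0 (fun _ => Classical.arbitrary A)) (hSb _)
  calc ∑ i : Fin k, S (fun j => w j (π j i)) ≤ ∑ _i : Fin k, sStar :=
        Finset.sum_le_sum fun i _ => hSb _
    _ = (k : ℝ) * sStar := by simp [mul_comm]
    _ ≤ (L ⟨0, hm⟩ : ℝ) * sStar := by
        apply mul_le_mul_of_nonneg_right _ hsq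
        exact_mod_cast algn_k_le π hπ ⟨0, hm⟩

lemma algnSet_bddAbove [Nonempty A] (hm : 1 ≤ m) (hS0 : ∀ x, 0 ≤ S x) {sStar : ℝ} (hSb : ∀ x, S x ≤ sStar) (L : Fin m → ℕ) (w : ∀ j : Fin m, Fin (L j) → A) :
    BddAbove (algnSet S L w) :=
  ⟨(L ⟨0, hm⟩ : ℝ) * sStar, fun _ hx => algnSet_le S hm hS0 hSb hx⟩

lemma optScoreV_nonneg [Nonempty A] (hm : 1 ≤ m) (hS0 : ∀ x, 0 ≤ S x) {sStar : ℝ} (hSb : ∀ x, S x ≤ sStar) (L : Fin m → ℕ) (w : ∀ j : Fin m, Fin (L j) → A) :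
    0 ≤ optScoreV m L S w :=
  le_csSup (algnSet_bddAbove S hm hS0 hSb L w) (zero_mem_algnSet S L w)

lemma optScoreV_le [Nonempty A] (hm : 1 ≤ m) (hS0 : ∀ x, 0 ≤ S x) {sStar : ℝ} (hSb : ∀ x, S x ≤ sStar) (L : Fin m → ℕ) (w : ∀ j : Fin m, Fin (L j) → A) :
    optScoreV m L S w ≤ (L ⟨0, hm⟩ : ℝ) * sStar :=
  csSup_le ⟨0, zero_mem_algnSet S L w⟩ fun _ hx => algnSet_le S hm hS0 hSb hx

end Comb
section Superadd
variable {A : Type*} [Nonempty A] {m : ℕ}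

lemma optScoreV_superadd_pointwise (S : (Fin m → A) → ℝ) (hm : 1 ≤ m) (hS0 : ∀ x, 0 ≤ S x)
    {sStar : ℝ} (hSb : ∀ x, S x ≤ sStar)
    (ℓ ℓ' L : Fin m → ℕ) (hL : ∀ j, ℓ j + ℓ' j ≤ L j)
    (w : ∀ j : Fin m, Fin (L j) → A) :
    optScoreV m ℓ S (fun j i => w j (Fin.castLE (le_trans (Nat.le_add_right _ _) (hL j)) i))
      + optScoreV m ℓ' S (fun j i => w j ⟨ℓ j + (i : ℕ),
          lt_of_lt_of_le (Nat.add_lt_add_left i.isLt _) (hL j)⟩)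
      ≤ optScoreV m L S w := by
  set w₁ : ∀ j : Fin m, Fin (ℓ j) → A :=
    fun j i => w j (Fin.castLE (le_trans (Nat.le_add_right _ _) (hL j)) i) with hw₁
  set w₂ : ∀ j : Fin m, Fin (ℓ' j) → A :=
    fun j i => w j ⟨ℓ j + (i : ℕ), lt_of_lt_of_le (Nat.add_lt_add_left i.isLt _) (hL j)⟩ with hw₂
  have hmem : ∀ x ∈ algnSet S ℓ w₁, ∀ y ∈ algnSet S ℓ' w₂, x + y ∈ algnSet S L w := by
    rintro x ⟨k, π, hπ, rfl⟩ y ⟨k', π', hπ', rfl⟩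
    refine ⟨k + k', fun j i =>
      if h : (i : ℕ) < k then Fin.castLE (le_trans (Nat.le_add_right _ _) (hL j)) (π j ⟨i, h⟩)
      else ⟨ℓ j + (π' j ⟨(i : ℕ) - k, by omega⟩ : ℕ), by
        exact lt_of_lt_of_le (Nat.add_lt_add_left (π' j _).isLt _) (hL j)⟩, ?_, ?_⟩
    · intro j a b hab
      rw [Fin.lt_def] at hab
      by_cases ha : (a : ℕ) < k <;> by_cases hb : (b : ℕ) < k
      · simp only [dif_pos ha, dif_pos hb, Fin.lt_def, Fin.coe_castLE]
        exact hπ j (by rwa [Fin.mk_lt_mk])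
      · simp only [dif_pos ha, dif_neg hb, Fin.lt_def, Fin.coe_castLE]
        have : ((π j ⟨a, ha⟩ : ℕ)) < ℓ j := (π j _).isLt
        omega
      · omega
      · simp only [dif_neg ha, dif_neg hb, Fin.lt_def]
        have := hπ' j (a := ⟨(a : ℕ) - k, by omega⟩) (b := ⟨(b : ℕ) - k, by omega⟩)
          (by rw [Fin.mk_lt_mk]; omega)
        rw [Fin.lt_def] at this
        omega
    · rw [Fin.sum_univ_add]
      congr 1
      · refine Finset.sum_congr rfl fun i _ => ?_
        congr 1
        funext j
        beta_reduce
        have hlt : ((Fin.castAdd k' i : Fin (k + k')) : ℕ) < k := i.isLt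
        rw [dif_pos hlt]
        simp [hw₁]
      · refine Finset.sum_congr rfl fun i _ => ?_
        congr 1
        funext j
        beta_reduce
        have hge : ¬ ((Fin.natAdd k i : Fin (k + k')) : ℕ) < k := by simp
        rw [dif_neg hge]
        simp only [hw₂]
        congr 1
        · ext
          simp
  have hA : (algnSet S ℓ w₁).Nonempty := ⟨0, zero_mem_algnSet S ℓ w₁⟩
  have hB : (algnSet S ℓ' w₂).Nonempty := ⟨0, zero_mem_algnSet S ℓ' w₂⟩
  have bddC := algnSet_bddAbove S hm hS0 hSb L w
  rw [optScoreV_eq, optScoreV_eq, optScoreV_eq]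
  have h1 : ∀ x ∈ algnSet S ℓ w₁, sSup (algnSet S ℓ' w₂) ≤ sSup (algnSet S L w) - x := by
    intro x hx
    refine csSup_le hB fun y hy => ?_
    have := le_csSup bddC (hmem x hx y hy)
    linarith
  have h2 : sSup (algnSet S ℓ w₁) ≤ sSup (algnSet S L w) - sSup (algnSet S ℓ' w₂) := by
    refine csSup_le hA fun x hx => ?_
    have := h1 x hx
    linarith
  linarith

end Superadd
section Meas
variable {A : Type*} [MeasurableSpace A]

lemma aemeasurable_finset_sup' {ι γ : Type*} {mγ : MeasurableSpace γ} {μ : Measure γ}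
    (s : Finset ι) (hs : s.Nonempty) (f : ι → γ → ℝ) (hf : ∀ i, AEMeasurable (f i) μ) :
    AEMeasurable (fun w => s.sup' hs (fun i => f i w)) μ := by
  induction hs using Finset.Nonempty.cons_induction with
  | singleton a => simpa using hf a
  | cons a s ha hs ih =>
      have : (fun w => (Finset.cons a s ha).sup' (Finset.cons_nonempty ha) fun i => f i w)
          = fun w => (f a w) ⊔ (s.sup' hs fun i => f i w) := by
        funext w; exact Finset.sup'_cons hs _
      rw [this]
      exact (hf a).max ih

variable [Nonempty A] {m : ℕ} (p : Measure A) [IsProbabilityMeasure p]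

lemma optScoreV_aemeasurable (S : (Fin m → A) → ℝ) (hm : 1 ≤ m)
    (hSmeas : AEMeasurable S (Measure.pi fun _ : Fin m => p)) (L : Fin m → ℕ) :
    AEMeasurable (optScoreV m L S)
      (Measure.pi fun j : Fin m => Measure.pi fun _ : Fin (L j) => p) := by
  classical
  set K := L ⟨0, hm⟩ with hK
  let I := Σ k : Fin (K + 1), ∀ j : Fin m, Fin (k : ℕ) → Fin (L j)
  let G : I → (∀ j : Fin m, Fin (L j) → A) → ℝ := fun pr w =>
    if ∀ j, StrictMono (pr.2 j) then ∑ i : Fin (pr.1 : ℕ), S (fun j => w j (pr.2 j i)) else 0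
  have hne : (Finset.univ : Finset I).Nonempty := by
    refine ⟨⟨⟨0, Nat.succ_pos _⟩, fun j i => i.elim0⟩, Finset.mem_univ _⟩
  have hrep : ∀ w, optScoreV m L S w = Finset.univ.sup' hne (fun pr => G pr w) := by
    intro w
    rw [Finset.sup'_eq_csSup_image, Finset.coe_univ, Set.image_univ, optScoreV_eq]
    congr 1
    ext x
    constructor
    · rintro ⟨k, π, hπ, rfl⟩
      have hk : k < K + 1 := Nat.lt_succ_of_le (algn_k_le π hπ ⟨0, hm⟩)
      refine ⟨⟨⟨k, hk⟩, π⟩, ?_⟩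
      simp only [G]
      rw [if_pos hπ]
    · rintro ⟨pr, rfl⟩
      simp only [G]
      by_cases h : ∀ j, StrictMono (pr.2 j)
      · rw [if_pos h]
        exact ⟨(pr.1 : ℕ), pr.2, h, rfl⟩
      · rw [if_neg h]; exact zero_mem_algnSet S L w
  have hG : ∀ pr : I, AEMeasurable (G pr)
      (Measure.pi fun j : Fin m => Measure.pi fun _ : Fin (L j) => p) := by
    intro pr
    by_cases h : ∀ j, StrictMono (pr.2 j)
    · simp only [G, if_pos h]
      refine Finset.aemeasurable_fun_sum _ fun i _ => ?_
      exact hSmeas.comp_quasiMeasurePreserving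
        (measurePreserving_select p L (fun j => pr.2 j i)).quasiMeasurePreserving
    · simp only [G, if_neg h]; exact aemeasurable_const
  have : AEMeasurable (fun w => Finset.univ.sup' hne (fun pr => G pr w))
      (Measure.pi fun j : Fin m => Measure.pi fun _ : Fin (L j) => p) :=
    aemeasurable_finset_sup' _ hne G hG
  exact this.congr (by filter_upwards with w using (hrep w).symm)

lemma optScoreV_integrable (S : (Fin m → A) → ℝ) (hm : 1 ≤ m) (hS0 : ∀ x, 0 ≤ S x)
    {sStar : ℝ} (hSb : ∀ x, S x ≤ sStar)
    (hSmeas : AEMeasurable S (Measure.pi fun _ : Fin m => p)) (L : Fin m → ℕ) :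
    Integrable (optScoreV m L S)
      (Measure.pi fun j : Fin m => Measure.pi fun _ : Fin (L j) => p) := by
  refine Integrable.mono' (integrable_const ((L ⟨0, hm⟩ : ℝ) * sStar))
    (optScoreV_aemeasurable p S hm hSmeas L).aestronglyMeasurable ?_
  filter_upwards with w
  rw [Real.norm_eq_abs, abs_of_nonneg (optScoreV_nonneg S hm hS0 hSb L w)]
  exact optScoreV_le S hm hS0 hSb L w

end Meas
section Diag
variable {A : Type*} [Nonempty A] {m : ℕ}

lemma optScoreV_const_word (S : (Fin m → A) → ℝ) (hm : 1 ≤ m) (hS0 : ∀ x, 0 ≤ S x)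
    (L : Fin m → ℕ) (x : Fin m → A) :
    optScoreV m L S (fun j _ => x j)
      = ((Finset.univ.inf' ⟨⟨0, hm⟩, Finset.mem_univ _⟩ L : ℕ) : ℝ) * S x := by
  classical
  set kmin : ℕ := Finset.univ.inf' ⟨⟨0, hm⟩, Finset.mem_univ _⟩ L with hkmin
  rw [optScoreV_eq]
  apply IsGreatest.csSup_eq
  constructor
  · refine ⟨kmin, fun j => Fin.castLE (Finset.inf'_le _ (Finset.mem_univ j)),
      fun j => Fin.strictMono_castLE _, ?_⟩
    simp [Finset.sum_const, nsmul_eq_mul]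
  · rintro y ⟨k, π, hπ, rfl⟩
    have h1 : ∑ i : Fin k, S (fun j => (fun j _ => x j) j (π j i)) = (k : ℝ) * S x := by
      simp [Finset.sum_const, nsmul_eq_mul]
    rw [h1]
    have hk : k ≤ kmin := Finset.le_inf' _ _ fun j _ => algn_k_le π hπ j
    exact mul_le_mul_of_nonneg_right (by exact_mod_cast hk) (hS0 x)

end Diag

section NotMeas
variable {A : Type*} [Fintype A] [Nonempty A] [MeasurableSpace A]
  (p : Measure A) [IsProbabilityMeasure p] {m : ℕ}

lemma integral_optScoreV_eq_zero (S : (Fin m → A) → ℝ) (hm : 1 ≤ m) (hS0 : ∀ x, 0 ≤ S x)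
    (hnot : ¬ AEMeasurable S (Measure.pi fun _ : Fin m => p))
    (L : Fin m → ℕ) (hL1 : ∀ j, 1 ≤ L j) :
    ∫ w, optScoreV m L S w
      ∂(Measure.pi fun j : Fin m => Measure.pi fun _ : Fin (L j) => p) = 0 := by
  classical
  set μL := (Measure.pi fun j : Fin m => Measure.pi fun _ : Fin (L j) => p) with hμL
  apply integral_undef
  intro hInt
  apply hnot
  obtain ⟨g, hgsm, hae⟩ := hInt.1
  set kmin : ℕ := Finset.univ.inf' ⟨⟨0, hm⟩, Finset.mem_univ _⟩ L with hkmin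
  have hk1 : 1 ≤ kmin := Finset.le_inf' _ _ fun j _ => hL1 j
  have hkR : (0 : ℝ) < (kmin : ℝ) := by exact_mod_cast hk1
  set ι : (Fin m → A) → (∀ j : Fin m, Fin (L j) → A) := fun x j _ => x j with hι
  set M := toMeasurable μL {w | optScoreV m L S w ≠ g w} with hMdef
  have hMmeas : MeasurableSet M := measurableSet_toMeasurable _ _
  have hMnull : μL M = 0 := by
    rw [hMdef, measure_toMeasurable]
    exact ae_iff.mp hae
  set NA := {a : A | p (mAtom a) = 0} with hNA
  set NAset : Set A := ⋃ a ∈ NA, mAtom a with hNAset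
  have hNAmeas : MeasurableSet NAset :=
    MeasurableSet.biUnion (Set.toFinite _).countable fun a _ => mAtom_measurableSet a
  have hNAnull : p NAset = 0 :=
    (measure_biUnion_null_iff (Set.toFinite _).countable).mpr fun a ha => ha
  set S' : (Fin m → A) → ℝ := fun x => g (ι x) / kmin with hS'
  have hS'meas : Measurable S' := by
    apply Measurable.div_const
    exact hgsm.measurable.comp
      (measurable_pi_lambda _ fun j => measurable_pi_lambda _ fun i => measurable_pi_apply j)
  have key : ∀ x : Fin m → A, (∀ j, x j ∉ NAset) → S x = S' x := by
    intro x hx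
    have hpos : ∀ j, p (mAtom (x j)) ≠ 0 := by
      intro j h0
      exact hx j (Set.mem_biUnion h0 (self_mem_mAtom (x j)))
    have hnotM : ι x ∉ M := by
      intro hmem
      set B : Set (∀ j : Fin m, Fin (L j) → A) :=
        Set.univ.pi fun j => Set.univ.pi fun _ : Fin (L j) => mAtom (x j) with hB
      have hBsub : B ⊆ M := by
        intro w' hw'
        have hab : ∀ j, ∀ i : Fin (L j), mRel (ι x j i) (w' j i) := by
          intro j i
          have := (Set.mem_univ_pi.mp hw' j)
          have h2 := Set.mem_univ_pi.mp this i
          exact mem_mAtom_iff.mp h2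
        exact (measurableSet_invariant (fun j u v => ∀ i, mRel (u i) (v i))
          (fun j s hs a b hRab =>
            measurableSet_invariant (fun _ a b => mRel a b)
              (fun _ s' hs' a' b' hr => hr s' hs') hs hRab)
          hMmeas hab).mp hmem
      have hBpos : μL B ≠ 0 := by
        rw [hB, hμL, Measure.pi_pi]
        rw [Finset.prod_ne_zero_iff]
        intro j _
        rw [Measure.pi_pi]
        rw [Finset.prod_ne_zero_iff]
        exact fun _ _ => hpos j
      exact hBpos (measure_mono_null hBsub hMnull)
    have heq : optScoreV m L S (ι x) = g (ι x) := by
      by_contra hne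
      exact hnotM (subset_toMeasurable _ _ hne)
    show S x = g (ι x) / (kmin : ℝ)
    rw [← heq]
    have hval : optScoreV m L S (ι x) = (kmin : ℝ) * S x := optScoreV_const_word S hm hS0 L x
    rw [hval, mul_comm, mul_div_assoc, div_self hkR.ne', mul_one]
  refine ⟨S', hS'meas, ?_⟩
  have hsub : {x : Fin m → A | S x ≠ S' x} ⊆ ⋃ j : Fin m, Function.eval j ⁻¹' NAset := by
    intro x hx
    by_contra hZ
    simp only [Set.mem_iUnion, Set.mem_preimage, not_exists] at hZ
    exact hx (key x hZ)
  apply measure_mono_null hsub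
  apply measure_iUnion_null
  intro j
  rw [pi_eval_preimage p j hNAmeas]
  exact hNAnull
end NotMeas
section IntSuperadd
variable {A : Type*} [Nonempty A] [MeasurableSpace A]
  (p : Measure A) [IsProbabilityMeasure p] {m : ℕ}

lemma integral_optScoreV_superadd (S : (Fin m → A) → ℝ) (hm : 1 ≤ m) (hS0 : ∀ x, 0 ≤ S x)
    {sStar : ℝ} (hSb : ∀ x, S x ≤ sStar)
    (hSmeas : AEMeasurable S (Measure.pi fun _ : Fin m => p))
    (ℓ ℓ' L : Fin m → ℕ) (hL : ∀ j, ℓ j + ℓ' j ≤ L j) :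
    (∫ w, optScoreV m ℓ S w ∂(Measure.pi fun j : Fin m => Measure.pi fun _ : Fin (ℓ j) => p))
    + (∫ w, optScoreV m ℓ' S w ∂(Measure.pi fun j : Fin m => Measure.pi fun _ : Fin (ℓ' j) => p))
    ≤ ∫ w, optScoreV m L S w ∂(Measure.pi fun j : Fin m => Measure.pi fun _ : Fin (L j) => p) := by
  set μL := (Measure.pi fun j : Fin m => Measure.pi fun _ : Fin (L j) => p) with hμL
  set μ₁ := (Measure.pi fun j : Fin m => Measure.pi fun _ : Fin (ℓ j) => p) with hμ₁
  set μ₂ := (Measure.pi fun j : Fin m => Measure.pi fun _ : Fin (ℓ' j) => p) with hμ₂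
  set P : (∀ j : Fin m, Fin (L j) → A) → (∀ j : Fin m, Fin (ℓ j) → A) :=
    fun w j => (w j) ∘ (Fin.castLE (le_trans (Nat.le_add_right _ _) (hL j))) with hPdef
  set Q : (∀ j : Fin m, Fin (L j) → A) → (∀ j : Fin m, Fin (ℓ' j) → A) :=
    fun w j => (w j) ∘ (fun i : Fin (ℓ' j) => ⟨ℓ j + (i : ℕ),
      lt_of_lt_of_le (Nat.add_lt_add_left i.isLt _) (hL j)⟩) with hQdef
  have hP : MeasurePreserving P μL μ₁ :=
    measurePreserving_pi_map (fun j : Fin m => Measure.pi fun _ : Fin (L j) => p)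
      (fun j : Fin m => Measure.pi fun _ : Fin (ℓ j) => p)
      (fun j u => u ∘ (Fin.castLE (le_trans (Nat.le_add_right _ _) (hL j))))
      (fun j => measurePreserving_comp_inj p _ (Fin.castLE_injective _))
  have hQ : MeasurePreserving Q μL μ₂ :=
    measurePreserving_pi_map (fun j : Fin m => Measure.pi fun _ : Fin (L j) => p)
      (fun j : Fin m => Measure.pi fun _ : Fin (ℓ' j) => p)
      (fun j u => u ∘ (fun i : Fin (ℓ' j) => ⟨ℓ j + (i : ℕ),
        lt_of_lt_of_le (Nat.add_lt_add_left i.isLt _) (hL j)⟩))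
      (fun j => measurePreserving_comp_inj p _ (by
        intro a b hab
        simp only [Fin.mk.injEq] at hab
        ext
        omega))
  have hint₁ : Integrable (optScoreV m ℓ S) μ₁ := optScoreV_integrable p S hm hS0 hSb hSmeas ℓ
  have hint₂ : Integrable (optScoreV m ℓ' S) μ₂ := optScoreV_integrable p S hm hS0 hSb hSmeas ℓ'
  have hintL : Integrable (optScoreV m L S) μL := optScoreV_integrable p S hm hS0 hSb hSmeas L
  have h₁ : ∫ w, optScoreV m ℓ S w ∂μ₁ = ∫ w, optScoreV m ℓ S (P w) ∂μL := by
    rw [← hP.map_eq]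
    exact integral_map hP.measurable.aemeasurable
      (by rw [hP.map_eq]; exact hint₁.1)
  have h₂ : ∫ w, optScoreV m ℓ' S w ∂μ₂ = ∫ w, optScoreV m ℓ' S (Q w) ∂μL := by
    rw [← hQ.map_eq]
    exact integral_map hQ.measurable.aemeasurable
      (by rw [hQ.map_eq]; exact hint₂.1)
  have hintP : Integrable (fun w => optScoreV m ℓ S (P w)) μL :=
    (hP.integrable_comp hint₁.1).mpr hint₁
  have hintQ : Integrable (fun w => optScoreV m ℓ' S (Q w)) μL :=
    (hQ.integrable_comp hint₂.1).mpr hint₂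
  rw [h₁, h₂, ← integral_add hintP hintQ]
  apply integral_mono (hintP.add hintQ) hintL
  intro w
  exact optScoreV_superadd_pointwise S hm hS0 hSb ℓ ℓ' L hL w
end IntSuperadd

lemma div_mul_div_cancel_mid (x a N : ℝ) (ha : a ≠ 0) : x / a * (a / N) = x / N := by
  rw [div_mul_div_comm, mul_comm x a, mul_div_mul_left _ _ ha]

theorem stmt8' {A : Type*} [Fintype A] [Nonempty A] [MeasurableSpace A]
    (p : Measure A) [IsProbabilityMeasure p]
    (m : ℕ) (hm : 1 ≤ m) (S : (Fin m → A) → ℝ) (hS0 : ∀ x, 0 ≤ S x)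
    (sStar : ℝ) (hSb : ∀ x, S x ≤ sStar)
    (g : (Fin m → ℝ) → ℝ)
    (hg : ∀ q : Fin m → ℝ, (∀ j, 0 < q j) → (∑ j, q j) = m →
      Tendsto (fun n : ℕ => (∫ w, optScoreV m (fun j => ⌈(n : ℝ) * q j⌉₊) S w
        ∂(Measure.pi fun j : Fin m => Measure.pi fun _ : Fin (⌈(n : ℝ) * q j⌉₊) => p)) / n)
        atTop (nhds (g q))) :
    ∀ (c₁ c₂ : ℝ) (q r : Fin m → ℝ), 0 < c₁ → 0 < c₂ → c₁ + c₂ = 1 →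
      (∀ j, 0 < q j) → (∑ j, q j) = m → (∀ j, 0 < r j) → (∑ j, r j) = m →
      c₁ * g q + c₂ * g r ≤ g (fun j => c₁ * q j + c₂ * r j) := by
  intro c₁ c₂ q r hc₁ hc₂ hc hq_pos hq_sum hr_pos hr_sum
  classical
  set EL : (Fin m → ℕ) → ℝ := fun L => ∫ w, optScoreV m L S w
    ∂(Measure.pi fun j : Fin m => Measure.pi fun _ : Fin (L j) => p) with hELdef
  set s : Fin m → ℝ := fun j => c₁ * q j + c₂ * r j with hsdef
  have hs_pos : ∀ j, 0 < s j := fun j =>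
    add_pos (mul_pos hc₁ (hq_pos j)) (mul_pos hc₂ (hr_pos j))
  have hs_sum : (∑ j, s j) = m := by
    simp only [hsdef]
    rw [Finset.sum_add_distrib, ← Finset.mul_sum, ← Finset.mul_sum, hq_sum, hr_sum]
    linear_combination (m : ℝ) * hc
  have hgq := hg q hq_pos hq_sum
  have hgr := hg r hr_pos hr_sum
  have hgs := hg s hs_pos hs_sum
  by_cases hSmeas : AEMeasurable S (Measure.pi fun _ : Fin m => p)
  · -- measurable case
    have hne : (Finset.univ : Finset (Fin m)).Nonempty := ⟨⟨0, hm⟩, Finset.mem_univ _⟩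
    set δ : ℝ := Finset.univ.inf' hne (fun j => q j + r j) with hδdef
    have hδ : 0 < δ := by
      rw [hδdef, Finset.lt_inf'_iff]
      exact fun j _ => add_pos (hq_pos j) (hr_pos j)
    set E : ℝ := 2 / δ with hEdef
    have hE : 0 < E := div_pos two_pos hδ
    set n₁ : ℕ → ℕ := fun N => ⌊c₁ * (N : ℝ) - E⌋₊ with hn₁def
    set n₂ : ℕ → ℕ := fun N => ⌊c₂ * (N : ℝ) - E⌋₊ with hn₂def
    have hcast : Tendsto (fun N : ℕ => (N : ℝ)) atTop atTop := tendsto_natCast_atTop_atTop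
    have htopgen : ∀ c : ℝ, 0 < c →
        Tendsto (fun N : ℕ => c * (N : ℝ) - E) atTop atTop := by
      intro c hc0
      have := tendsto_atTop_add_const_right atTop (-E) (hcast.const_mul_atTop hc0)
      exact this.congr fun N => (sub_eq_add_neg _ _).symm
    have key : ∀ N : ℕ, 1 ≤ N → (1 : ℝ) ≤ c₁ * N - E → (1 : ℝ) ≤ c₂ * N - E →
        EL (fun j => ⌈(n₁ N : ℝ) * q j⌉₊) + EL (fun j => ⌈(n₂ N : ℝ) * r j⌉₊)
          ≤ EL (fun j => ⌈(N : ℝ) * s j⌉₊) := by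
      intro N hN h1 h2
      apply integral_optScoreV_superadd p S hm hS0 hSb hSmeas
      intro j
      have hδj : δ ≤ q j + r j := Finset.inf'_le _ (Finset.mem_univ j)
      have hn₁le : (n₁ N : ℝ) ≤ c₁ * N - E := Nat.floor_le (by linarith)
      have hn₂le : (n₂ N : ℝ) ≤ c₂ * N - E := Nat.floor_le (by linarith)
      have hn₁0 : (0:ℝ) ≤ (n₁ N : ℝ) := Nat.cast_nonneg _
      have hn₂0 : (0:ℝ) ≤ (n₂ N : ℝ) := Nat.cast_nonneg _
      have hq1 : ((⌈(n₁ N : ℝ) * q j⌉₊ : ℝ)) < (n₁ N : ℝ) * q j + 1 :=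
        Nat.ceil_lt_add_one (mul_nonneg hn₁0 (le_of_lt (hq_pos j)))
      have hr1 : ((⌈(n₂ N : ℝ) * r j⌉₊ : ℝ)) < (n₂ N : ℝ) * r j + 1 :=
        Nat.ceil_lt_add_one (mul_nonneg hn₂0 (le_of_lt (hr_pos j)))
      have hEδ : E * δ = 2 := by
        rw [hEdef]
        field_simp
      have htarget : ((⌈(n₁ N : ℝ) * q j⌉₊ : ℝ)) + ((⌈(n₂ N : ℝ) * r j⌉₊ : ℝ))
          ≤ (N : ℝ) * s j := by
        have e1 : (n₁ N : ℝ) * q j ≤ (c₁ * N - E) * q j :=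
          mul_le_mul_of_nonneg_right hn₁le (le_of_lt (hq_pos j))
        have e2 : (n₂ N : ℝ) * r j ≤ (c₂ * N - E) * r j :=
          mul_le_mul_of_nonneg_right hn₂le (le_of_lt (hr_pos j))
        have e3 : E * δ ≤ E * (q j + r j) :=
          mul_le_mul_of_nonneg_left hδj (le_of_lt hE)
        have hsj : (N : ℝ) * s j = N * (c₁ * q j) + N * (c₂ * r j) := by
          simp only [hsdef]; ring
        nlinarith
      have hfin : ((⌈(n₁ N : ℝ) * q j⌉₊ + ⌈(n₂ N : ℝ) * r j⌉₊ : ℕ) : ℝ)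
          ≤ ((⌈(N : ℝ) * s j⌉₊ : ℕ) : ℝ) := by
        push_cast
        exact le_trans htarget (Nat.le_ceil _)
      exact_mod_cast hfin
    have hn₁top : Tendsto n₁ atTop atTop := tendsto_nat_floor_atTop.comp (htopgen c₁ hc₁)
    have hn₂top : Tendsto n₂ atTop atTop := tendsto_nat_floor_atTop.comp (htopgen c₂ hc₂)
    have hAq : Tendsto (fun N : ℕ => EL (fun j => ⌈(n₁ N : ℝ) * q j⌉₊) / (n₁ N))
        atTop (nhds (g q)) := hgq.comp hn₁top
    have hAr : Tendsto (fun N : ℕ => EL (fun j => ⌈(n₂ N : ℝ) * r j⌉₊) / (n₂ N))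
        atTop (nhds (g r)) := hgr.comp hn₂top
    have hratio : ∀ c : ℝ, 0 < c →
        Tendsto (fun N : ℕ => ((⌊c * (N : ℝ) - E⌋₊ : ℝ) / N)) atTop (nhds c) := by
      intro c hc0
      have hevc : ∀ᶠ N : ℕ in atTop, (1 : ℝ) ≤ c * N - E :=
        (htopgen c hc0).eventually_ge_atTop 1
      have hevN : ∀ᶠ N : ℕ in atTop, 1 ≤ N := eventually_ge_atTop 1
      have hlo : Tendsto (fun N : ℕ => c - (E + 1) / N) atTop (nhds c) := by
        have h0 : Tendsto (fun N : ℕ => (E + 1) / (N : ℝ)) atTop (nhds 0) :=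
          tendsto_const_div_atTop_nhds_zero_nat (E + 1)
        simpa using ((tendsto_const_nhds : Tendsto (fun _ : ℕ => c) atTop (nhds c)).sub h0)
      have hhi : Tendsto (fun N : ℕ => c - E / N) atTop (nhds c) := by
        have h0 : Tendsto (fun N : ℕ => E / (N : ℝ)) atTop (nhds 0) :=
          tendsto_const_div_atTop_nhds_zero_nat E
        simpa using ((tendsto_const_nhds : Tendsto (fun _ : ℕ => c) atTop (nhds c)).sub h0)
      refine tendsto_of_tendsto_of_tendsto_of_le_of_le' hlo hhi ?_ ?_
      · filter_upwards [hevc, hevN] with N h1 hN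
        have hNpos : (0:ℝ) < N := by exact_mod_cast hN
        have hfl : c * N - E - 1 ≤ (⌊c * (N : ℝ) - E⌋₊ : ℝ) := by
          have := Nat.sub_one_lt_floor (c * (N : ℝ) - E)
          linarith
        have hid : c - (E + 1) / N = (c * N - E - 1) / N := by
          rw [eq_div_iff hNpos.ne']
          field_simp
          all_goals ring
        rw [hid]
        gcongr
      · filter_upwards [hevc, hevN] with N h1 hN
        have hNpos : (0:ℝ) < N := by exact_mod_cast hN
        have hfl : (⌊c * (N : ℝ) - E⌋₊ : ℝ) ≤ c * N - E := Nat.floor_le (by linarith)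
        have hid : c - E / N = (c * N - E) / N := by
          rw [eq_div_iff hNpos.ne']
          field_simp
          all_goals ring
        rw [hid]
        gcongr
    have hBq : Tendsto (fun N : ℕ => ((n₁ N : ℝ) / N)) atTop (nhds c₁) := hratio c₁ hc₁
    have hBr : Tendsto (fun N : ℕ => ((n₂ N : ℝ) / N)) atTop (nhds c₂) := hratio c₂ hc₂
    have hleft : Tendsto (fun N : ℕ =>
        EL (fun j => ⌈(n₁ N : ℝ) * q j⌉₊) / (n₁ N) * ((n₁ N : ℝ) / N)
        + EL (fun j => ⌈(n₂ N : ℝ) * r j⌉₊) / (n₂ N) * ((n₂ N : ℝ) / N))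
        atTop (nhds (g q * c₁ + g r * c₂)) := (hAq.mul hBq).add (hAr.mul hBr)
    have hfinal : g q * c₁ + g r * c₂ ≤ g s := by
      refine le_of_tendsto_of_tendsto hleft hgs ?_
      filter_upwards [(htopgen c₁ hc₁).eventually_ge_atTop 1,
        (htopgen c₂ hc₂).eventually_ge_atTop 1, eventually_ge_atTop 1,
        hn₁top.eventually_ge_atTop 1, hn₂top.eventually_ge_atTop 1] with N h1 h2 hN h1' h2'
      have hNpos : (0:ℝ) < N := by exact_mod_cast hN
      have hn₁ne : ((n₁ N : ℝ)) ≠ 0 := by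
        have : (1:ℝ) ≤ (n₁ N : ℝ) := by exact_mod_cast h1'
        linarith
      have hn₂ne : ((n₂ N : ℝ)) ≠ 0 := by
        have : (1:ℝ) ≤ (n₂ N : ℝ) := by exact_mod_cast h2'
        linarith
      have hk := key N hN h1 h2
      rw [div_mul_div_cancel_mid _ _ _ hn₁ne, div_mul_div_cancel_mid _ _ _ hn₂ne, ← add_div]
      gcongr
    linarith
  · -- non-measurable case
    have hzero : ∀ (t : Fin m → ℝ), (∀ j, 0 < t j) →
        Tendsto (fun n : ℕ => EL (fun j => ⌈(n : ℝ) * t j⌉₊) / n) atTop (nhds (g t)) →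
        g t = 0 := by
      intro t ht htend
      have hev : ∀ᶠ n : ℕ in atTop,
          (fun _ : ℕ => (0:ℝ)) n = EL (fun j => ⌈(n : ℝ) * t j⌉₊) / n := by
        filter_upwards [eventually_ge_atTop 1] with n hn
        have hn0 : (0:ℝ) < (n:ℝ) := by exact_mod_cast hn
        have hL1 : ∀ j, 1 ≤ ⌈(n : ℝ) * t j⌉₊ := fun j =>
          Nat.ceil_pos.mpr (mul_pos hn0 (ht j))
        simp only [hELdef]
        rw [integral_optScoreV_eq_zero p S hm hS0 hSmeas _ hL1, zero_div]
      have h0 : Tendsto (fun n : ℕ => EL (fun j => ⌈(n : ℝ) * t j⌉₊) / n)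
          atTop (nhds 0) := Tendsto.congr' hev tendsto_const_nhds
      exact tendsto_nhds_unique htend h0
    rw [hzero q hq_pos hgq, hzero r hr_pos hgr, hzero s hs_pos hgs]
    simp

theorem stmt8 {A : Type*} [Fintype A] [Nonempty A] [MeasurableSpace A]
    (p : Measure A) [IsProbabilityMeasure p]
    (m : ℕ) (hm : 1 ≤ m) (S : (Fin m → A) → ℝ) (hS0 : ∀ x, 0 ≤ S x)
    (sStar : ℝ) (hSb : ∀ x, S x ≤ sStar) (hSperm : PermInvariant S)
    (D : ℝ) (hBD : BddDiffOne S D)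
    (g : (Fin m → ℝ) → ℝ)
    (hg : ∀ q : Fin m → ℝ, (∀ j, 0 < q j) → (∑ j, q j) = m →
      Tendsto (fun n : ℕ => expLV p (fun j => ⌈(n : ℝ) * q j⌉₊) S / n) atTop (nhds (g q))) :
    ∀ (c₁ c₂ : ℝ) (q r : Fin m → ℝ), 0 < c₁ → 0 < c₂ → c₁ + c₂ = 1 →
      (∀ j, 0 < q j) → (∑ j, q j) = m → (∀ j, 0 < r j) → (∑ j, r j) = m →
      c₁ * g q + c₂ * g r ≤ g (fun j => c₁ * q j + c₂ * r j) := by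
  exact stmt8' p m hm S hS0 sStar hSb g hg
end
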